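/- Let 𝕐 ⊆ ℙ^{s−1} be closed in the Zariski topology. Then I(𝕐) is a binomial ideal if and only if 𝕐 ∪ {[0]} is a submonoid of ℙ^{s−1} ∪ {[0]} under componentwise multiplication. -/
import Mathlib


open MvPolynomial

noncomputable section

variable {K : Type} [Field K] {s : ℕ}

def IsBinomialIdeal {σ : Type} (I : Ideal (MvPolynomial σ K)) : Prop :=
  ∃ B : Set (MvPolynomial σ K),
    (∀ f ∈ B, ∃ a b : σ →₀ ℕ, f = monomial a 1 - monomial b 1) ∧ I = Ideal.span B

def affineVanishingIdeal (Y : Set (Fin s → K)) : Ideal (MvPolynomial (Fin s) K) :=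
  Ideal.span {f | ∀ α ∈ Y, eval α f = 0}

def affineZeroSet (I : Ideal (MvPolynomial (Fin s) K)) : Set (Fin s → K) :=
  {α | ∀ f ∈ I, eval α f = 0}

def projVanishingIdeal (Y : Set (Projectivization K (Fin s → K))) :
    Ideal (MvPolynomial (Fin s) K) :=
  Ideal.span {f | (∃ n, f.IsHomogeneous n) ∧
    ∀ (α : Fin s → K) (hα : α ≠ 0), Projectivization.mk K α hα ∈ Y → eval α f = 0}

def projZeroSet (I : Ideal (MvPolynomial (Fin s) K)) :
    Set (Projectivization K (Fin s → K)) :=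
  {p | ∀ f ∈ I, (∃ n, f.IsHomogeneous n) →
    ∀ (α : Fin s → K) (hα : α ≠ 0), Projectivization.mk K α hα = p → eval α f = 0}

def IsProjSubmonoid (Y : Set (Projectivization K (Fin s → K))) : Prop :=
  (∀ h1 : (1 : Fin s → K) ≠ 0, Projectivization.mk K 1 h1 ∈ Y) ∧
  ∀ (α β : Fin s → K) (hα : α ≠ 0) (hβ : β ≠ 0),
    Projectivization.mk K α hα ∈ Y → Projectivization.mk K β hβ ∈ Y →
    ∀ hab : α * β ≠ 0, Projectivization.mk K (α * β) hab ∈ Y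

def projTorus (K : Type) [Field K] (s : ℕ) : Set (Projectivization K (Fin s → K)) :=
  {p | ∀ (α : Fin s → K) (hα : α ≠ 0), Projectivization.mk K α hα = p → ∀ i, α i ≠ 0}

def IsTorusSubgroup (Y : Set (Projectivization K (Fin s → K))) : Prop :=
  Y ⊆ projTorus K s ∧ IsProjSubmonoid Y ∧
  ∀ (α : Fin s → K) (hα : α ≠ 0), Projectivization.mk K α hα ∈ Y →
    ∀ hinv : α⁻¹ ≠ 0, Projectivization.mk K α⁻¹ hinv ∈ Y

def IsLatticeIdeal (I : Ideal (MvPolynomial (Fin s) K)) : Prop :=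
  IsBinomialIdeal I ∧ ∀ (i : Fin s) (f : MvPolynomial (Fin s) K), X i * f ∈ I → f ∈ I

def IsGradedIdeal {σ : Type} (I : Ideal (MvPolynomial σ K)) : Prop :=
  ∀ f ∈ I, ∀ n, homogeneousComponent n f ∈ I

/-! ### Auxiliary material -/

/-- The monomial character `α ↦ ∏ i, α i ^ a i` as a monoid hom. -/
def charOf (a : Fin s →₀ ℕ) : (Fin s → K) →* K where
  toFun α := a.prod fun i e => α i ^ e
  map_one' := by simp [Finsupp.prod]
  map_mul' α β := by
    simp [Finsupp.prod, Pi.mul_apply, mul_pow, Finset.prod_mul_distrib]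

lemma charOf_apply (a : Fin s →₀ ℕ) (α : Fin s → K) :
    charOf a α = ∏ i ∈ a.support, α i ^ a i := rfl

lemma eval_monomial_one (a : Fin s →₀ ℕ) (α : Fin s → K) :
    eval α (monomial a (1 : K)) = charOf a α := by
  simp [eval_monomial, charOf_apply, Finsupp.prod]

lemma eval_zero_of_span {S : Set (MvPolynomial (Fin s) K)} {f : MvPolynomial (Fin s) K}
    (hf : f ∈ Ideal.span S) (α : Fin s → K) (h : ∀ g ∈ S, eval α g = 0) :
    eval α f = 0 := by
  refine Submodule.span_induction (fun g hg => h g hg) (by simp) ?_ ?_ hf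
  · intro x y _ _ hx hy; simp [hx, hy]
  · intro c x _ hx; simp [smul_eq_mul, hx]

lemma eval_smul_of_isHomogeneous {f : MvPolynomial (Fin s) K} {n : ℕ}
    (hf : f.IsHomogeneous n) (c : K) (x : Fin s → K) :
    eval (c • x) f = c ^ n * eval x f := by
  rw [eval_eq, eval_eq, Finset.mul_sum]
  refine Finset.sum_congr rfl fun d hd => ?_
  have hdeg : d.degree = n := by
    rw [Finsupp.degree_eq_weight_one]
    exact hf (mem_support_iff.mp hd)
  have : ∏ i ∈ d.support, (c • x) i ^ d i
      = c ^ n * ∏ i ∈ d.support, x i ^ d i := by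
    calc ∏ i ∈ d.support, (c • x) i ^ d i
        = ∏ i ∈ d.support, (c ^ d i * x i ^ d i) := by
          refine Finset.prod_congr rfl fun i _ => ?_
          simp [mul_pow]
      _ = (∏ i ∈ d.support, c ^ d i) * ∏ i ∈ d.support, x i ^ d i :=
          Finset.prod_mul_distrib
      _ = c ^ n * ∏ i ∈ d.support, x i ^ d i := by
          rw [Finset.prod_pow_eq_pow_sum]
          have : ∑ i ∈ d.support, d i = n := hdeg
          rw [this]
  rw [this]; ring

lemma vanish_of_mem_pvi {Y : Set (Projectivization K (Fin s → K))}
    {f : MvPolynomial (Fin s) K}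
    (hf : f ∈ projVanishingIdeal Y)
    {α : Fin s → K} (hα : α ≠ 0)
    (hmem : Projectivization.mk K α hα ∈ Y) : eval α f = 0 :=
  eval_zero_of_span hf α (fun g hg => hg.2 α hα hmem)

/-- The affine cone over `Y` together with `0`, as a submonoid of `Fin s → K`. -/
def coneMonoid (Y : Set (Projectivization K (Fin s → K))) (hY : IsProjSubmonoid Y) :
    Submonoid (Fin s → K) where
  carrier := {α | α = 0 ∨ ∃ hα : α ≠ 0, Projectivization.mk K α hα ∈ Y}
  one_mem' := by
    by_cases h1 : (1 : Fin s → K) = 0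
    · exact Or.inl h1
    · exact Or.inr ⟨h1, hY.1 h1⟩
  mul_mem' := by
    rintro α β (rfl | ⟨hα, ha⟩) hb
    · left; simp
    · rcases hb with rfl | ⟨hβ, hbm⟩
      · left; simp
      · by_cases hab : α * β = 0
        · exact Or.inl hab
        · exact Or.inr ⟨hab, hY.2 α β hα hβ ha hbm hab⟩

lemma one_ne_zero_pi (hs : 0 < s) : (1 : Fin s → K) ≠ 0 :=
  fun h => one_ne_zero (congrFun h ⟨0, hs⟩)

lemma coeff_zero_of_vanish (hs : 0 < s) {Y : Set (Projectivization K (Fin s → K))}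
    (hY : IsProjSubmonoid Y) {f : MvPolynomial (Fin s) K} {n : ℕ}
    (hf : f.IsHomogeneous n)
    (hvan : ∀ (α : Fin s → K) (hα : α ≠ 0), Projectivization.mk K α hα ∈ Y → eval α f = 0) :
    coeff 0 f = 0 := by
  by_contra h
  have hn0 : n = 0 := by
    have := hf h
    simpa using this.symm
  have hsupp : f.support = {0} := by
    apply Finset.eq_singleton_iff_unique_mem.mpr
    refine ⟨mem_support_iff.mpr h, fun d hd => ?_⟩
    have := hf (mem_support_iff.mp hd)
    rw [hn0] at this
    have : d.degree = 0 := by rw [Finsupp.degree_eq_weight_one]; exact this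
    exact (Finsupp.degree_eq_zero_iff d).mp this
  have h1 : eval (1 : Fin s → K) f = 0 :=
    hvan 1 (one_ne_zero_pi hs) (hY.1 (one_ne_zero_pi hs))
  rw [eval_eq, hsupp] at h1
  simp at h1
  exact h h1

lemma eq_zero_of_separated (hs : 0 < s) {Y : Set (Projectivization K (Fin s → K))}
    (hY : IsProjSubmonoid Y) {f : MvPolynomial (Fin s) K} {n : ℕ}
    (hf : f.IsHomogeneous n)
    (hvan : ∀ (α : Fin s → K) (hα : α ≠ 0), Projectivization.mk K α hα ∈ Y → eval α f = 0)
    (hsep : ∀ a ∈ f.support, ∀ b ∈ f.support, a ≠ b →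
      ∃ (α : Fin s → K) (hα : α ≠ 0), Projectivization.mk K α hα ∈ Y ∧
        charOf a α ≠ charOf b α) :
    f = 0 := by
  classical
  set M := coneMonoid Y hY with hM
  set χ : (Fin s →₀ ℕ) → (M →* K) := fun a => (charOf a).comp M.subtype with hχ
  have hinj : Function.Injective fun a : f.support => χ a.1 := by
    rintro ⟨a, ha⟩ ⟨b, hb⟩ hab
    simp only [Subtype.mk_eq_mk]
    by_contra hne
    obtain ⟨α, hα, hmem, hval⟩ := hsep a ha b hb hne
    have hαM : α ∈ M := Or.inr ⟨hα, hmem⟩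
    have := congrArg (fun g : M →* K => g ⟨α, hαM⟩) hab
    exact hval this
  have hli := (linearIndependent_monoidHom M K).comp _ hinj
  have h0 : coeff 0 f = 0 := coeff_zero_of_vanish hs hY hf hvan
  have hsum : (∑ a : f.support, coeff a.1 f • ((χ a.1 : M → K))) = 0 := by
    funext β
    rcases β with ⟨α, hαM⟩
    simp only [Finset.sum_apply, Pi.smul_apply, smul_eq_mul, Pi.zero_apply]
    have : ∀ a : f.support, (χ a.1) ⟨α, hαM⟩ = charOf a.1 α := fun a => rfl
    simp only [this]
    rcases hαM with rfl | ⟨hα, hmem⟩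
    · refine Finset.sum_eq_zero fun a _ => ?_
      have ha0 : a.1 ≠ 0 := by
        intro h; exact (mem_support_iff.mp a.2) (by rw [h]; exact h0)
      obtain ⟨i, hi⟩ := Finsupp.support_nonempty_iff.mpr ha0
      rw [charOf_apply, Finset.prod_eq_zero hi]
      · ring
      · exact zero_pow (Finsupp.mem_support_iff.mp hi)
    · have := hvan α hα hmem
      rw [eval_eq] at this
      rw [← this]
      rw [← Finset.sum_attach f.support fun d => coeff d f * ∏ i ∈ d.support, α i ^ d i]
      rfl
  have := Fintype.linearIndependent_iff.mp hli (fun a => coeff a.1 f) hsum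
  ext d
  rw [coeff_zero]
  by_cases hd : d ∈ f.support
  · exact this ⟨d, hd⟩
  · exact notMem_support_iff.mp hd

/-- Set of binomials in the vanishing ideal. -/
def binomSet (Y : Set (Projectivization K (Fin s → K))) : Set (MvPolynomial (Fin s) K) :=
  {g | (∃ a b : Fin s →₀ ℕ, g = monomial a 1 - monomial b 1) ∧ g ∈ projVanishingIdeal Y}

lemma key_induction (hs : 0 < s) {Y : Set (Projectivization K (Fin s → K))}
    (hY : IsProjSubmonoid Y) :
    ∀ (N : ℕ) (f : MvPolynomial (Fin s) K), f.support.card ≤ N →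
    ∀ {n : ℕ}, f.IsHomogeneous n →
    (∀ (α : Fin s → K) (hα : α ≠ 0), Projectivization.mk K α hα ∈ Y → eval α f = 0) →
    f ∈ Ideal.span (binomSet Y) := by
  classical
  intro N
  induction N with
  | zero =>
    intro f hcard n hf hvan
    have : f.support = ∅ := Finset.card_eq_zero.mp (Nat.le_zero.mp hcard)
    have : f = 0 := support_eq_empty.mp this
    simp [this]
  | succ N ih =>
    intro f hcard n hf hvan
    by_cases hpair : ∃ a ∈ f.support, ∃ b ∈ f.support, a ≠ b ∧
        ∀ (α : Fin s → K) (hα : α ≠ 0), Projectivization.mk K α hα ∈ Y →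
          charOf a α = charOf b α
    · obtain ⟨a, ha, b, hb, hab, hequal⟩ := hpair
      set g : MvPolynomial (Fin s) K := monomial a 1 - monomial b 1 with hg
      have hga : (monomial a (1:K)).IsHomogeneous n := by
        refine isHomogeneous_monomial 1 ?_
        rw [Finsupp.degree_eq_weight_one]; exact hf (mem_support_iff.mp ha)
      have hgb : (monomial b (1:K)).IsHomogeneous n := by
        refine isHomogeneous_monomial 1 ?_
        rw [Finsupp.degree_eq_weight_one]; exact hf (mem_support_iff.mp hb)
      have hghom : g.IsHomogeneous n := hga.sub hgb
      have hgvan : ∀ (α : Fin s → K) (hα : α ≠ 0),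
          Projectivization.mk K α hα ∈ Y → eval α g = 0 := by
        intro α hα hmem
        rw [hg, map_sub, eval_monomial_one, eval_monomial_one, hequal α hα hmem, sub_self]
      have hgmem : g ∈ binomSet Y :=
        ⟨⟨a, b, rfl⟩, Ideal.subset_span ⟨⟨n, hghom⟩, hgvan⟩⟩
      set f' : MvPolynomial (Fin s) K := f - coeff a f • g with hf'
      have hsupp' : f'.support ⊆ f.support.erase a := by
        intro d hd
        have hda : coeff d f' ≠ 0 := mem_support_iff.mp hd
        rw [Finset.mem_erase]
        constructor
        · intro hdeq
          apply hda
          rw [hf', hg, coeff_sub, coeff_smul, coeff_sub, hdeq, coeff_monomial,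
            coeff_monomial, if_pos rfl, if_neg (fun h => hab h.symm)]
          simp [smul_eq_mul]
        · by_contra hdf
          apply hda
          have h1 : coeff d f = 0 := notMem_support_iff.mp hdf
          have h2 : coeff d (monomial b (1:K)) = 0 := by
            rw [coeff_monomial, if_neg]
            intro h; rw [h] at hb; exact hdf hb
          have h3 : coeff d (monomial a (1:K)) = 0 := by
            rw [coeff_monomial, if_neg]
            intro h; rw [h] at ha; exact hdf ha
          rw [hf', hg, coeff_sub, coeff_smul, coeff_sub, h1, h2, h3]
          simp
      have hcard' : f'.support.card ≤ N := by
        have := Finset.card_le_card hsupp'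
        have h2 : (f.support.erase a).card < f.support.card :=
          Finset.card_erase_lt_of_mem ha
        omega
      have hf'hom : f'.IsHomogeneous n :=
        hf.sub ((homogeneousSubmodule (Fin s) K n).smul_mem (coeff a f) hghom)
      have hf'van : ∀ (α : Fin s → K) (hα : α ≠ 0),
          Projectivization.mk K α hα ∈ Y → eval α f' = 0 := by
        intro α hα hmem
        rw [hf', map_sub, hvan α hα hmem, smul_eq_C_mul, map_mul, hgvan α hα hmem]
        simp
      have hmem' : f' ∈ Ideal.span (binomSet Y) := ih f' hcard' hf'hom hf'van
      have : f = f' + coeff a f • g := by rw [hf']; ring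
      rw [this, smul_eq_C_mul]
      exact Ideal.add_mem _ hmem' (Ideal.mul_mem_left _ _ (Ideal.subset_span hgmem))
    · push_neg at hpair
      have hsep : ∀ a ∈ f.support, ∀ b ∈ f.support, a ≠ b →
          ∃ (α : Fin s → K) (hα : α ≠ 0), Projectivization.mk K α hα ∈ Y ∧
            charOf a α ≠ charOf b α := by
        intro a ha b hb hab
        obtain ⟨α, hα, hmem, hval⟩ := hpair a ha b hb hab
        exact ⟨α, hα, hmem, hval⟩
      have : f = 0 := eq_zero_of_separated hs hY hf hvan hsep
      simp [this]

theorem closed_binomial_iff_monoid (hs : 0 < s)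
    (Y : Set (Projectivization K (Fin s → K)))
    (hclosed : ∃ J : Ideal (MvPolynomial (Fin s) K), IsGradedIdeal J ∧ Y = projZeroSet J) :
    IsBinomialIdeal (projVanishingIdeal Y) ↔ IsProjSubmonoid Y := by
  obtain ⟨J, hJgr, hYJ⟩ := hclosed
  have hJle : J ≤ projVanishingIdeal Y := by
    intro f hfJ
    rw [← sum_homogeneousComponent f]
    refine Ideal.sum_mem _ fun i _ =>
      Ideal.subset_span ⟨⟨i, homogeneousComponent_isHomogeneous i f⟩, ?_⟩
    intro α hα hmem
    rw [hYJ] at hmem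
    exact hmem _ (hJgr f hfJ i) ⟨i, homogeneousComponent_isHomogeneous i f⟩ α hα rfl
  have hzero : projZeroSet (projVanishingIdeal Y) ⊆ Y := by
    intro p hp
    rw [hYJ]
    intro f hfJ hhom α hα hmk
    exact hp f (hJle hfJ) hhom α hα hmk
  constructor
  · rintro ⟨B, hB, hBspan⟩
    constructor
    · intro h1
      apply hzero
      rintro f hfI ⟨n, hn⟩ α hα hmk
      obtain ⟨c, hc⟩ := (Projectivization.mk_eq_mk_iff K α 1 hα h1).mp hmk
      have h1eval : eval (1 : Fin s → K) f = 0 := by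
        rw [hBspan] at hfI
        refine eval_zero_of_span hfI 1 fun g hg => ?_
        obtain ⟨a, b, rfl⟩ := hB g hg
        rw [map_sub, eval_monomial_one, eval_monomial_one, map_one, map_one, sub_self]
      have : α = (c : K) • (1 : Fin s → K) := by rw [← hc, Units.smul_def]
      rw [this, eval_smul_of_isHomogeneous hn, h1eval, mul_zero]
    · intro α β hα hβ hmemα hmemβ hab
      apply hzero
      rintro f hfI ⟨n, hn⟩ γ hγ hmk
      obtain ⟨c, hc⟩ := (Projectivization.mk_eq_mk_iff K γ (α * β) hγ hab).mp hmk
      have hprod : eval (α * β) f = 0 := by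
        rw [hBspan] at hfI
        refine eval_zero_of_span hfI (α * β) fun g hg => ?_
        have hgI : g ∈ projVanishingIdeal Y := by
          rw [hBspan] at *; exact Ideal.subset_span hg
        obtain ⟨a, b, rfl⟩ := hB g hg
        have h1 := vanish_of_mem_pvi hgI hα hmemα
        have h2 := vanish_of_mem_pvi hgI hβ hmemβ
        rw [map_sub, eval_monomial_one, eval_monomial_one, sub_eq_zero] at h1 h2 ⊢
        rw [map_mul, map_mul, h1, h2]
      have : γ = (c : K) • (α * β) := by rw [← hc, Units.smul_def]
      rw [this, eval_smul_of_isHomogeneous hn, hprod, mul_zero]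
  · intro hY
    refine ⟨binomSet Y, fun g hg => hg.1, ?_⟩
    refine le_antisymm ?_ (Ideal.span_le.mpr fun g hg => hg.2)
    refine Ideal.span_le.mpr ?_
    rintro f ⟨⟨n, hn⟩, hvan⟩
    exact key_induction hs hY f.support.card f le_rfl hn hvan
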